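/- Let (Ω, P) be a probability space, X a finite nonempty index set, and for each x ∈ X let Z_x : Ω → ℝ be a random variable whose law is the Gaussian distribution N(μ_x, σ_x²), where μ_x ∈ ℝ and σ_x ≥ 0. Fix δ ∈ (0,1) with 2δ < |X|, and set β_δ = 2·log(|X|/(2δ)). Let W = max_{x ∈ X} Z_x. Then the (1−δ)-quantile of W satisfies inf{ w ∈ ℝ : P(W ≤ w) ≥ 1 − δ } ≤ max_{x ∈ X} ( μ_x + √β_δ · σ_x ). -/

import Mathlib

open MeasureTheory ProbabilityTheory Real
open scoped ENNReal NNReal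

lemma std_gaussian_tail {t : ℝ} (ht : 0 ≤ t) :
    gaussianReal 0 1 (Set.Ioi t) ≤ ENNReal.ofReal (rexp (-t ^ 2 / 2) / 2) := by
  rw [gaussianReal_apply_eq_integral 0 one_ne_zero]
  apply ENNReal.ofReal_le_ofReal
  have hpdf : ∀ x : ℝ, gaussianPDFReal 0 1 x = (Real.sqrt (2 * π))⁻¹ * rexp (-x ^ 2 / 2) := by
    intro x
    simp [gaussianPDFReal]
  have hint : IntegrableOn (fun x => rexp (-x ^ 2 / 2)) (Set.Ioi t) := by
    have h := integrable_exp_neg_mul_sq (show (0 : ℝ) < 1 / 2 by norm_num)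
    have : (fun x : ℝ => rexp (-(1 / 2 : ℝ) * x ^ 2)) = fun x : ℝ => rexp (-x ^ 2 / 2) := by
      funext x; ring_nf
    rw [this] at h
    exact h.integrableOn
  have hint2 : IntegrableOn (fun x => rexp (-(x - t) ^ 2 / 2)) (Set.Ioi t) := by
    have h := integrable_exp_neg_mul_sq (show (0 : ℝ) < 1 / 2 by norm_num)
    have : (fun x : ℝ => rexp (-(1 / 2 : ℝ) * x ^ 2)) = fun x : ℝ => rexp (-x ^ 2 / 2) := by
      funext x; ring_nf
    rw [this] at h
    exact (h.comp_sub_right t).integrableOn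
  have hmono : ∫ x in Set.Ioi t, rexp (-x ^ 2 / 2) ≤
      ∫ x in Set.Ioi t, rexp (-t ^ 2 / 2) * rexp (-(x - t) ^ 2 / 2) := by
    refine setIntegral_mono_on hint (hint2.const_mul _) measurableSet_Ioi ?_
    intro x hx
    rw [← Real.exp_add]
    apply Real.exp_le_exp.2
    have hx' : t < x := hx
    nlinarith
  have hshift : ∫ x in Set.Ioi t, rexp (-(x - t) ^ 2 / 2) = ∫ x in Set.Ioi 0, rexp (-x ^ 2 / 2) := by
    rw [← integral_indicator measurableSet_Ioi, ← integral_indicator measurableSet_Ioi]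
    have : (Set.Ioi t).indicator (fun x => rexp (-(x - t) ^ 2 / 2)) =
        fun x => (Set.Ioi 0).indicator (fun y => rexp (-y ^ 2 / 2)) (x - t) := by
      funext x
      simp only [Set.indicator_apply, Set.mem_Ioi, sub_pos]
    rw [this, integral_sub_right_eq_self (μ := volume)
      ((Set.Ioi (0:ℝ)).indicator (fun y => rexp (-y ^ 2 / 2))) t]
  have hI0 : ∫ x in Set.Ioi (0:ℝ), rexp (-x ^ 2 / 2) = Real.sqrt (2 * π) / 2 := by
    have h := integral_gaussian_Ioi (1 / 2)
    have h2 : (fun x : ℝ => rexp (-(1 / 2 : ℝ) * x ^ 2)) = fun x : ℝ => rexp (-x ^ 2 / 2) := by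
      funext x; ring_nf
    rw [show π / (1 / 2 : ℝ) = 2 * π by ring] at h
    rw [← h]
    congr 1
    funext x; ring_nf
  have hsqrt_pos : 0 < Real.sqrt (2 * π) := Real.sqrt_pos.2 (by positivity)
  calc ∫ x in Set.Ioi t, gaussianPDFReal 0 1 x
      = (Real.sqrt (2 * π))⁻¹ * ∫ x in Set.Ioi t, rexp (-x ^ 2 / 2) := by
        simp_rw [hpdf]; rw [integral_const_mul]
    _ ≤ (Real.sqrt (2 * π))⁻¹ * (rexp (-t ^ 2 / 2) * (Real.sqrt (2 * π) / 2)) := by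
        apply mul_le_mul_of_nonneg_left _ (by positivity)
        calc ∫ x in Set.Ioi t, rexp (-x ^ 2 / 2)
            ≤ ∫ x in Set.Ioi t, rexp (-t ^ 2 / 2) * rexp (-(x - t) ^ 2 / 2) := hmono
          _ = rexp (-t ^ 2 / 2) * ∫ x in Set.Ioi t, rexp (-(x - t) ^ 2 / 2) := by
              rw [integral_const_mul]
          _ = rexp (-t ^ 2 / 2) * (Real.sqrt (2 * π) / 2) := by rw [hshift, hI0]
    _ = rexp (-t ^ 2 / 2) / 2 := by field_simp

lemma gaussian_tail (μ σ t : ℝ) (hσ : 0 ≤ σ) (ht : 0 ≤ t) :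
    gaussianReal μ (Real.toNNReal (σ ^ 2)) (Set.Ioi (μ + t * σ)) ≤
      ENNReal.ofReal (rexp (-t ^ 2 / 2) / 2) := by
  rcases eq_or_lt_of_le hσ with hσ0 | hσ0
  · rw [← hσ0, show Real.toNNReal ((0:ℝ) ^ 2) = 0 by simp, gaussianReal_zero_var,
      mul_zero, add_zero, Measure.dirac_apply' _ measurableSet_Ioi]
    simp
  · have hv : Real.toNNReal (σ ^ 2) ≠ 0 := by
      simp only [ne_eq, Real.toNNReal_eq_zero, not_le]
      positivity
    have hmap : gaussianReal μ (Real.toNNReal (σ ^ 2)) =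
        Measure.map (fun x => σ * x + μ) (gaussianReal 0 1) := by
      have h1 : Measure.map (σ * ·) (gaussianReal 0 1) =
          gaussianReal (σ * 0) (⟨σ ^ 2, sq_nonneg _⟩ * 1) := gaussianReal_map_const_mul σ
      have h2 : (⟨σ ^ 2, sq_nonneg _⟩ * 1 : NNReal) = Real.toNNReal (σ ^ 2) := by
        ext
        simp [Real.coe_toNNReal _ (sq_nonneg σ)]
        exact mul_one (σ ^ 2)
      rw [h2, mul_zero] at h1
      have h3 := gaussianReal_map_add_const (μ := 0) (v := Real.toNNReal (σ ^ 2)) μ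
      rw [zero_add] at h3
      rw [← h3, ← h1, Measure.map_map (by fun_prop) (by fun_prop)]
      rfl
    rw [hmap, Measure.map_apply (by fun_prop) measurableSet_Ioi]
    have hpre : (fun x => σ * x + μ) ⁻¹' (Set.Ioi (μ + t * σ)) = Set.Ioi t := by
      ext x
      simp only [Set.mem_preimage, Set.mem_Ioi]
      constructor <;> intro h <;> nlinarith
    rw [hpre]
    exact std_gaussian_tail ht

lemma exists_Iic_lt (ρ : Measure ℝ) [IsProbabilityMeasure ρ] {c : ℝ≥0∞} (hc0 : 0 < c)
    (hc1 : c ≤ 1) : ∃ w : ℝ, ρ (Set.Iic w) < c := by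
  have htend := tendsto_measure_Ici_atBot ρ
  rw [measure_univ] at htend
  have hlt : (1 : ℝ≥0∞) - c / 2 < 1 :=
    ENNReal.sub_lt_self ENNReal.one_ne_top one_ne_zero (by simp [hc0.ne'])
  have hev := (tendsto_order.1 htend).1 _ hlt
  obtain ⟨w, hw⟩ := hev.exists
  refine ⟨w - 1, ?_⟩
  by_contra h'
  push_neg at h'
  have hdisj : Disjoint (Set.Iic (w - 1)) (Set.Ici w) :=
    Set.Iic_disjoint_Ici.2 (by linarith)
  have hsum : ρ (Set.Iic (w - 1)) + ρ (Set.Ici w) ≤ 1 := by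
    rw [← measure_union hdisj measurableSet_Ici]
    exact (measure_mono (Set.subset_univ _)).trans_eq measure_univ
  have h2 : ρ (Set.Ici w) ≤ 1 - c := by
    refine ENNReal.le_sub_of_add_le_left (by exact (hc1.trans_lt ENNReal.one_lt_top).ne) ?_
    calc c + ρ (Set.Ici w) ≤ ρ (Set.Iic (w - 1)) + ρ (Set.Ici w) := by
          exact add_le_add_left h' _
      _ ≤ 1 := hsum
  have h3 : (1 : ℝ≥0∞) - c ≤ 1 - c / 2 :=
    tsub_le_tsub_left (ENNReal.half_le_self) 1
  exact absurd ((hw.trans_le h2).trans_le h3) (lt_irrefl _)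

theorem quantile_of_max_gaussian_bound
    {Ω : Type*} [MeasurableSpace Ω] (P : Measure Ω) [IsProbabilityMeasure P]
    {X : Type*} [Fintype X] [Nonempty X]
    (μ : X → ℝ) (σ : X → ℝ) (hσ : ∀ x, 0 ≤ σ x)
    (Z : X → Ω → ℝ)
    (hZ : ∀ x, Measure.map (Z x) P = gaussianReal (μ x) (Real.toNNReal ((σ x) ^ 2)))
    (δ : ℝ) (hδ : δ ∈ Set.Ioo (0 : ℝ) 1) (hδX : 2 * δ < (Fintype.card X : ℝ))
    (β : ℝ) (hβ : β = 2 * Real.log ((Fintype.card X : ℝ) / (2 * δ)))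
    (W : Ω → ℝ)
    (hW : ∀ ω, W ω = Finset.univ.sup' Finset.univ_nonempty (fun x => Z x ω)) :
    sInf {w : ℝ | ENNReal.ofReal (1 - δ) ≤ P {ω | W ω ≤ w}} ≤
      Finset.univ.sup' Finset.univ_nonempty (fun x => μ x + Real.sqrt β * σ x) := by
  obtain ⟨hδ0, hδ1⟩ := hδ
  set n : ℝ := (Fintype.card X : ℝ) with hn
  have hnpos : 0 < n := by
    rw [hn]
    exact_mod_cast Fintype.card_pos
  have hβ0 : 0 ≤ β := by
    rw [hβ]
    have : (1 : ℝ) ≤ n / (2 * δ) := (one_le_div (by linarith)).2 hδX.le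
    have := Real.log_nonneg this
    linarith
  -- measurability of Z x
  have hAE : ∀ x, AEMeasurable (Z x) P := by
    intro x
    by_contra h
    have h0 : Measure.map (Z x) P = 0 := Measure.map_of_not_aemeasurable h
    have h1 : (gaussianReal (μ x) (Real.toNNReal ((σ x) ^ 2))) Set.univ = 1 := measure_univ
    rw [← hZ x, h0] at h1
    simp at h1
  -- the exponential computation
  have hexp : rexp (-(Real.sqrt β) ^ 2 / 2) / 2 = δ / n := by
    rw [Real.sq_sqrt hβ0, hβ]
    have harg : (0 : ℝ) < n / (2 * δ) := by positivity
    rw [show -(2 * Real.log (n / (2 * δ))) / 2 = -Real.log (n / (2 * δ)) by ring,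
      Real.exp_neg, Real.exp_log harg]
    field_simp
  set w₀ : ℝ := Finset.univ.sup' Finset.univ_nonempty (fun x => μ x + Real.sqrt β * σ x) with hw₀
  -- tail bound for each x
  have htail : ∀ x : X, P {ω | μ x + Real.sqrt β * σ x < Z x ω} ≤ ENNReal.ofReal (δ / n) := by
    intro x
    have hset : {ω | μ x + Real.sqrt β * σ x < Z x ω} =
        Z x ⁻¹' (Set.Ioi (μ x + Real.sqrt β * σ x)) := rfl
    rw [hset, ← Measure.map_apply_of_aemeasurable (hAE x) measurableSet_Ioi, hZ x]
    calc gaussianReal (μ x) (Real.toNNReal ((σ x) ^ 2)) (Set.Ioi (μ x + Real.sqrt β * σ x))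
        ≤ ENNReal.ofReal (rexp (-(Real.sqrt β) ^ 2 / 2) / 2) :=
          gaussian_tail (μ x) (σ x) (Real.sqrt β) (hσ x) (Real.sqrt_nonneg β)
      _ = ENNReal.ofReal (δ / n) := by rw [hexp]
  -- union bound
  have hunion : P {ω | w₀ < W ω} ≤ ENNReal.ofReal δ := by
    have hsub : {ω | w₀ < W ω} ⊆ ⋃ x : X, {ω | μ x + Real.sqrt β * σ x < Z x ω} := by
      intro ω hω
      simp only [Set.mem_setOf_eq] at hω
      rw [hW ω] at hω
      obtain ⟨x, -, hx⟩ := Finset.exists_mem_eq_sup' Finset.univ_nonempty (fun y => Z y ω)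
      refine Set.mem_iUnion.2 ⟨x, ?_⟩
      have hle : μ x + Real.sqrt β * σ x ≤ w₀ :=
        Finset.le_sup' (fun y => μ y + Real.sqrt β * σ y) (Finset.mem_univ x)
      simp only [Set.mem_setOf_eq]
      calc μ x + Real.sqrt β * σ x ≤ w₀ := hle
        _ < Finset.univ.sup' Finset.univ_nonempty (fun y => Z y ω) := hω
        _ = Z x ω := hx
    calc P {ω | w₀ < W ω} ≤ ∑' x : X, P {ω | μ x + Real.sqrt β * σ x < Z x ω} :=
          (measure_mono hsub).trans (measure_iUnion_le _)
      _ = ∑ x : X, P {ω | μ x + Real.sqrt β * σ x < Z x ω} := tsum_fintype _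
      _ ≤ ∑ _x : X, ENNReal.ofReal (δ / n) := Finset.sum_le_sum fun x _ => htail x
      _ = (Fintype.card X : ℝ≥0∞) * ENNReal.ofReal (δ / n) := by
          rw [Finset.sum_const, Finset.card_univ, nsmul_eq_mul]
      _ = ENNReal.ofReal δ := by
          rw [← ENNReal.ofReal_natCast, ← ENNReal.ofReal_mul (by positivity)]
          congr 1
          field_simp
          exact hn.symm
  -- membership of w₀
  have hmem : ENNReal.ofReal (1 - δ) ≤ P {ω | W ω ≤ w₀} := by
    have hcompl : {ω | W ω ≤ w₀}ᶜ = {ω | w₀ < W ω} := by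
      ext ω; simp [not_le]
    have h1 : (1 : ℝ≥0∞) ≤ P {ω | W ω ≤ w₀} + P {ω | w₀ < W ω} := by
      rw [← hcompl]
      calc (1 : ℝ≥0∞) = P Set.univ := measure_univ.symm
        _ = P ({ω | W ω ≤ w₀} ∪ {ω | W ω ≤ w₀}ᶜ) := by rw [Set.union_compl_self]
        _ ≤ P {ω | W ω ≤ w₀} + P {ω | W ω ≤ w₀}ᶜ := measure_union_le _ _
    calc ENNReal.ofReal (1 - δ) = 1 - ENNReal.ofReal δ := by
          rw [← ENNReal.ofReal_one, ← ENNReal.ofReal_sub _ hδ0.le]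
      _ ≤ 1 - P {ω | w₀ < W ω} := tsub_le_tsub_left hunion 1
      _ ≤ P {ω | W ω ≤ w₀} := by
          rw [tsub_le_iff_right]
          exact h1
  -- bounded below
  have hbdd : BddBelow {w : ℝ | ENNReal.ofReal (1 - δ) ≤ P {ω | W ω ≤ w}} := by
    obtain ⟨x₀⟩ := (inferInstance : Nonempty X)
    have : IsProbabilityMeasure (gaussianReal (μ x₀) (Real.toNNReal ((σ x₀) ^ 2))) :=
      inferInstance
    obtain ⟨w₁, hw₁⟩ := exists_Iic_lt (gaussianReal (μ x₀) (Real.toNNReal ((σ x₀) ^ 2)))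
      (c := ENNReal.ofReal (1 - δ)) (by simp [hδ1]) (by
        rw [← ENNReal.ofReal_one]
        exact ENNReal.ofReal_le_ofReal (by linarith))
    refine ⟨w₁, fun w hw => ?_⟩
    by_contra hcon
    push_neg at hcon
    have hWZ : {ω | W ω ≤ w} ⊆ {ω | Z x₀ ω ≤ w₁} := by
      intro ω hω
      simp only [Set.mem_setOf_eq] at hω ⊢
      have : Z x₀ ω ≤ W ω := by
        rw [hW ω]
        exact Finset.le_sup' (fun y => Z y ω) (Finset.mem_univ x₀)
      linarith
    have hZw : P {ω | Z x₀ ω ≤ w₁} =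
        gaussianReal (μ x₀) (Real.toNNReal ((σ x₀) ^ 2)) (Set.Iic w₁) := by
      rw [← hZ x₀, Measure.map_apply_of_aemeasurable (hAE x₀) measurableSet_Iic]
      rfl
    have : ENNReal.ofReal (1 - δ) ≤ gaussianReal (μ x₀) (Real.toNNReal ((σ x₀) ^ 2))
        (Set.Iic w₁) := by
      rw [← hZw]
      exact hw.trans (measure_mono hWZ)
    exact absurd this (not_le.2 hw₁)
  exact csInf_le hbdd hmem
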